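/- Let a, b, c > 0 and 0 < α < 1. If a real number x ≥ 0 satisfies x − a·(x + b)^α − c ≤ 0, then x ≤ a·max{(2a)^{α/(1−α)}, (2(b + c))^α} + b + c. -/
import Mathlib


theorem stmt_7 (a b c α x : ℝ) (ha : 0 < a) (hb : 0 < b) (hc : 0 < c)
    (hα0 : 0 < α) (hα1 : α < 1) (hx : 0 ≤ x)
    (h : x - a * (x + b) ^ α - c ≤ 0) :
    x ≤ a * max ((2 * a) ^ (α / (1 - α))) ((2 * (b + c)) ^ α) + b + c := by
  set y : ℝ := x + b with hy_def
  have hy : 0 < y := by positivity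
  have hyα : 0 < y ^ α := Real.rpow_pos_of_pos hy α
  have h1 : y ≤ a * y ^ α + (c + b) := by nlinarith [h]
  have hM : y ^ α ≤ max ((2 * a) ^ (α / (1 - α))) ((2 * (b + c)) ^ α) := by
    rcases le_total (b + c) (a * y ^ α) with hca | hca
    · -- then y ≤ 2 a y^α
      have h2 : y ≤ 2 * a * y ^ α := by nlinarith
      have h3 : y ^ (1 - α) * y ^ α = y := by
        rw [← Real.rpow_add hy]; norm_num
      have h4 : y ^ (1 - α) ≤ 2 * a := by
        have := h2
        nth_rewrite 1 [← h3] at this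
        exact le_of_mul_le_mul_right this hyα
      have h1α : (0:ℝ) < 1 - α := by linarith
      have h5 : y ≤ (2 * a) ^ (1 / (1 - α)) := by
        have := Real.rpow_le_rpow (Real.rpow_nonneg hy.le _) h4 (by positivity : (0:ℝ) ≤ 1 / (1 - α))
        rwa [← Real.rpow_mul hy.le, mul_one_div, div_self h1α.ne', Real.rpow_one] at this
      have h6 : y ^ α ≤ ((2 * a) ^ (1 / (1 - α))) ^ α :=
        Real.rpow_le_rpow hy.le h5 hα0.le
      have h7 : ((2 * a) ^ (1 / (1 - α))) ^ α = (2 * a) ^ (α / (1 - α)) := by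
        rw [← Real.rpow_mul (by positivity), one_div, inv_mul_eq_div]
      exact le_max_of_le_left (by rw [← h7]; exact h6)
    · have h2 : y ≤ 2 * (b + c) := by nlinarith
      exact le_max_of_le_right (Real.rpow_le_rpow hy.le h2 hα0.le)
  have : a * y ^ α ≤ a * max ((2 * a) ^ (α / (1 - α))) ((2 * (b + c)) ^ α) :=
    mul_le_mul_of_nonneg_left hM ha.le
  nlinarith [h]
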